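/- In the root system D_n realized as Δ = {±e_i ± e_j : 1 ≤ i < j ≤ n} with involution θ negating the coordinate e_n (θ(e_i) = e_i for i < n, θ(e_n) = −e_n), a pair of roots (α, β) satisfies that both α + β and α − θβ are roots if and only if (α, β) = (ε_i e_i + ε_n e_n, ε_j e_j − ε_n e_n) for distinct i, j ∈ {1, …, n−1} and signs ε_i, ε_j, ε_n ∈ {1, −1}. -/

import Mathlib

open scoped RealInnerProductSpace

/-- The standard basis vector `e_i` of `ℝ^n`. -/
noncomputable def e (n : ℕ) (i : Fin n) : EuclideanSpace ℝ (Fin n) :=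
  EuclideanSpace.single i 1

/-- The root system `D_n`: `{±e_i ± e_j : i < j}`. -/
def ΔD (n : ℕ) : Set (EuclideanSpace ℝ (Fin n)) :=
  {v | ∃ i j : Fin n, i < j ∧ ∃ ε δ : ℝ, (ε = 1 ∨ ε = -1) ∧ (δ = 1 ∨ δ = -1) ∧
    v = ε • e n i + δ • e n j}

/-- The involution `θ` negating the last coordinate. -/
noncomputable def θD (n : ℕ) (v : EuclideanSpace ℝ (Fin n)) :
    EuclideanSpace ℝ (Fin n) :=
  WithLp.toLp 2 (fun i => if i.val = n - 1 then -v i else v i)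

lemma coordEE (n : ℕ) (i j k : Fin n) (ε δ : ℝ) :
    (ε • e n i + δ • e n j) k = (if k = i then ε else 0) + (if k = j then δ else 0) := by
  simp [e, EuclideanSpace.single_apply, mul_ite]

lemma mem_ΔD_of {n : ℕ} {i j : Fin n} (hij : i ≠ j) {ε δ : ℝ}
    (hε : ε = 1 ∨ ε = -1) (hδ : δ = 1 ∨ δ = -1) : ε • e n i + δ • e n j ∈ ΔD n := by
  rcases lt_or_gt_of_ne hij with h | h
  · exact ⟨i, j, h, ε, δ, hε, hδ, rfl⟩
  · exact ⟨j, i, h, δ, ε, hδ, hε, add_comm _ _⟩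

lemma mem_ΔD_iff {n : ℕ} {v : EuclideanSpace ℝ (Fin n)} :
    v ∈ ΔD n ↔ ∃ i j : Fin n, i ≠ j ∧ ∃ ε δ : ℝ, (ε = 1 ∨ ε = -1) ∧ (δ = 1 ∨ δ = -1) ∧
      v = ε • e n i + δ • e n j := by
  constructor
  · rintro ⟨i, j, hij, ε, δ, hε, hδ, rfl⟩
    exact ⟨i, j, hij.ne, ε, δ, hε, hδ, rfl⟩
  · rintro ⟨i, j, hij, ε, δ, hε, hδ, rfl⟩
    exact mem_ΔD_of hij hε hδ

/-- disjoint supports: impossible -/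
lemma no_disjoint {n : ℕ} {a b c d : Fin n} (hab : a ≠ b) (hac : a ≠ c)
    (hbc : b ≠ c) {s1 s2 s3 s4 : ℝ}
    (h1 : s1 = 1 ∨ s1 = -1) (h2 : s2 = 1 ∨ s2 = -1) (h3 : s3 = 1 ∨ s3 = -1)
    (hcd : c ≠ d) (had : a ≠ d) (hbd : b ≠ d)
    (hsum : (s1 • e n a + s2 • e n b) + (s3 • e n c + s4 • e n d) ∈ ΔD n) : False := by
  obtain ⟨p, q, hpq, s5, s6, h5, h6, hEq⟩ := hsum
  have hx : ∀ x, (s1 • e n a + s2 • e n b) x + (s3 • e n c + s4 • e n d) x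
      = (s5 • e n p + s6 • e n q) x := by
    intro x
    have := congrFun (congrArg WithLp.ofLp hEq) x
    simpa using this
  have key : ∀ x : Fin n, (x = a ∨ x = b ∨ x = c) → (x = p ∨ x = q) := by
    intro x hx'
    by_contra h
    push_neg at h
    have hh := hx x
    rw [coordEE, coordEE, coordEE, if_neg h.1, if_neg h.2] at hh
    rcases hx' with rfl | rfl | rfl
    · rw [if_pos rfl, if_neg hab, if_neg hac, if_neg had] at hh
      rcases h1 with rfl | rfl <;> norm_num at hh
    · rw [if_neg (Ne.symm hab), if_pos rfl, if_neg hbc, if_neg hbd] at hh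
      rcases h2 with rfl | rfl <;> norm_num at hh
    · rw [if_neg (Ne.symm hac), if_neg (Ne.symm hbc), if_pos rfl, if_neg hcd] at hh
      rcases h3 with rfl | rfl <;> norm_num at hh
  have ha' := key a (Or.inl rfl)
  have hb' := key b (Or.inr (Or.inl rfl))
  have hc' := key c (Or.inr (Or.inr rfl))
  rcases ha' with rfl | rfl <;> rcases hb' with rfl | rfl <;> rcases hc' with rfl | rfl <;>
    simp_all

/-- equal supports: impossible -/
lemma no_double {n : ℕ} {a b : Fin n} (hab : a ≠ b) {s1 s2 s3 s4 : ℝ}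
    (h1 : s1 = 1 ∨ s1 = -1) (h2 : s2 = 1 ∨ s2 = -1) (h3 : s3 = 1 ∨ s3 = -1)
    (h4 : s4 = 1 ∨ s4 = -1)
    (hsum : (s1 • e n a + s2 • e n b) + (s3 • e n a + s4 • e n b) ∈ ΔD n) : False := by
  obtain ⟨p, q, hpq, s5, s6, h5, h6, hEq⟩ := hsum
  have hh : (s1 • e n a + s2 • e n b) p + (s3 • e n a + s4 • e n b) p
      = (s5 • e n p + s6 • e n q) p := by
    have := congrFun (congrArg WithLp.ofLp hEq) p
    simpa using this
  rw [coordEE, coordEE, coordEE, if_pos rfl, if_neg hpq.ne] at hh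
  by_cases hpa : p = a
  · rw [if_pos hpa, if_pos hpa] at hh
    rw [if_neg (hpa ▸ hab), if_neg (hpa ▸ hab)] at hh
    rcases h1 with rfl | rfl <;> rcases h3 with rfl | rfl <;>
      rcases h5 with rfl | rfl <;> norm_num at hh
  · rw [if_neg hpa, if_neg hpa] at hh
    by_cases hpb : p = b
    · rw [if_pos hpb, if_pos hpb] at hh
      rcases h2 with rfl | rfl <;> rcases h4 with rfl | rfl <;>
        rcases h5 with rfl | rfl <;> norm_num at hh
    · rw [if_neg hpb, if_neg hpb] at hh
      rcases h5 with rfl | rfl <;> norm_num at hh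

set_option maxHeartbeats 1000000 in
/-- core lemma: single overlap at `k`. -/
lemma core {n : ℕ} {a k d : Fin n} (hak : a ≠ k) (hkd : k ≠ d) (had : a ≠ d)
    {s1 s2 s3 s4 : ℝ}
    (h1 : s1 = 1 ∨ s1 = -1) (h2 : s2 = 1 ∨ s2 = -1) (h3 : s3 = 1 ∨ s3 = -1)
    (h4 : s4 = 1 ∨ s4 = -1)
    (hsum : (s1 • e n a + s2 • e n k) + (s3 • e n k + s4 • e n d) ∈ ΔD n)
    (hdiff : (s1 • e n a + s2 • e n k) - θD n (s3 • e n k + s4 • e n d) ∈ ΔD n) :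
    k.val = n - 1 ∧ s3 = -s2 := by
  -- from the sum: s2 + s3 = 0
  have hsc : s2 + s3 = 0 := by
    obtain ⟨p, q, hpq, s5, s6, h5, h6, hEq⟩ := hsum
    have hx : ∀ x, (s1 • e n a + s2 • e n k) x + (s3 • e n k + s4 • e n d) x
        = (s5 • e n p + s6 • e n q) x := by
      intro x; have := congrFun (congrArg WithLp.ofLp hEq) x; simpa using this
    have ha' : a = p ∨ a = q := by
      by_contra h
      push_neg at h
      have hh := hx a
      rw [coordEE, coordEE, coordEE, if_neg h.1, if_neg h.2, if_pos rfl, if_neg hak,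
        if_neg hak, if_neg had] at hh
      rcases h1 with rfl | rfl <;> norm_num at hh
    have hd' : d = p ∨ d = q := by
      by_contra h
      push_neg at h
      have hh := hx d
      rw [coordEE, coordEE, coordEE, if_neg h.1, if_neg h.2, if_neg (Ne.symm had),
        if_neg (Ne.symm hkd), if_neg (Ne.symm hkd), if_pos rfl] at hh
      rcases h4 with rfl | rfl <;> norm_num at hh
    have hkp : k ≠ p ∧ k ≠ q := by
      rcases ha' with rfl | rfl <;> rcases hd' with rfl | rfl <;>
        exact ⟨by tauto, by tauto⟩
    have hh := hx k
    rw [coordEE, coordEE, coordEE, if_neg hkp.1, if_neg hkp.2, if_neg (Ne.symm hak),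
      if_pos rfl, if_pos rfl, if_neg hkd] at hh
    linarith
  -- from the difference
  obtain ⟨p, q, hpq, s5, s6, h5, h6, hEq⟩ := hdiff
  have hx : ∀ x, (s1 • e n a + s2 • e n k) x - θD n (s3 • e n k + s4 • e n d) x
      = (s5 • e n p + s6 • e n q) x := by
    intro x; have := congrFun (congrArg WithLp.ofLp hEq) x; simpa using this
  have hθ : ∀ x, θD n (s3 • e n k + s4 • e n d) x
      = if x.val = n - 1 then -((s3 • e n k + s4 • e n d) x) else (s3 • e n k + s4 • e n d) x := by
    intro x; rfl
  have ha' : a = p ∨ a = q := by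
    by_contra h
    push_neg at h
    have hh := hx a
    rw [hθ, coordEE, coordEE, coordEE, if_neg h.1, if_neg h.2, if_pos rfl, if_neg hak,
      if_neg hak, if_neg had] at hh
    simp only [add_zero, zero_add, neg_zero, ite_self] at hh
    rcases h1 with rfl | rfl <;> norm_num at hh
  have hd' : d = p ∨ d = q := by
    by_contra h
    push_neg at h
    have hh := hx d
    rw [hθ, coordEE, coordEE, coordEE, if_neg h.1, if_neg h.2, if_neg (Ne.symm had),
      if_neg (Ne.symm hkd), if_neg (Ne.symm hkd), if_pos rfl] at hh
    rcases h4 with rfl | rfl <;> by_cases hdn : d.val = n - 1 <;>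
      simp [hdn] at hh
  have hkp : k ≠ p ∧ k ≠ q := by
    rcases ha' with rfl | rfl <;> rcases hd' with rfl | rfl <;>
      exact ⟨by tauto, by tauto⟩
  have hh := hx k
  rw [hθ, coordEE, coordEE, coordEE, if_neg hkp.1, if_neg hkp.2, if_neg (Ne.symm hak),
    if_pos rfl, if_pos rfl, if_neg hkd] at hh
  by_cases hkn : k.val = n - 1
  · exact ⟨hkn, by linarith⟩
  · rw [if_neg hkn] at hh
    simp only [add_zero, zero_add] at hh
    exfalso
    rcases h2 with rfl | rfl <;> rcases h3 with rfl | rfl <;> linarith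

set_option maxHeartbeats 1000000 in
/-- In `D_n` with `θ` negating `e_n`, `(α, β)` is matched (both `α + β`
and `α − θβ` are roots) iff `(α, β) = (ε_i e_i + ε_n e_n, ε_j e_j − ε_n e_n)` for
distinct `i, j < n` and signs `ε_i, ε_j, ε_n`. -/
theorem matched_pairs_Dn (n : ℕ) (hn : 4 ≤ n)
    (α β : EuclideanSpace ℝ (Fin n))
    (hα : α ∈ ΔD n) (hβ : β ∈ ΔD n) :
    (α + β ∈ ΔD n ∧ α - θD n β ∈ ΔD n) ↔
      ∃ (i j : Fin n) (εi εj εn : ℝ), i ≠ j ∧ i.val < n - 1 ∧ j.val < n - 1 ∧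
        (εi = 1 ∨ εi = -1) ∧ (εj = 1 ∨ εj = -1) ∧ (εn = 1 ∨ εn = -1) ∧
        α = εi • e n i + εn • e n ⟨n - 1, by omega⟩ ∧
        β = εj • e n j - εn • e n ⟨n - 1, by omega⟩ := by
  have hL : (⟨n - 1, by omega⟩ : Fin n).val = n - 1 := rfl
  constructor
  · rintro ⟨hsum, hdiff⟩
    obtain ⟨a, b, hab, s1, s2, h1, h2, hαeq⟩ := mem_ΔD_iff.mp hα
    obtain ⟨c, d, hcd, s3, s4, h3, h4, hβeq⟩ := mem_ΔD_iff.mp hβ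
    -- helper to build the conclusion given normalized data
    have build : ∀ (a' k d' : Fin n) (t1 t2 t3 t4 : ℝ), a' ≠ k → k ≠ d' → a' ≠ d' →
        (t1 = 1 ∨ t1 = -1) → (t2 = 1 ∨ t2 = -1) → (t3 = 1 ∨ t3 = -1) → (t4 = 1 ∨ t4 = -1) →
        α = t1 • e n a' + t2 • e n k → β = t3 • e n k + t4 • e n d' →
        ∃ (i j : Fin n) (εi εj εn : ℝ), i ≠ j ∧ i.val < n - 1 ∧ j.val < n - 1 ∧
          (εi = 1 ∨ εi = -1) ∧ (εj = 1 ∨ εj = -1) ∧ (εn = 1 ∨ εn = -1) ∧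
          α = εi • e n i + εn • e n ⟨n - 1, by omega⟩ ∧
          β = εj • e n j - εn • e n ⟨n - 1, by omega⟩ := by
      intro a' k d' t1 t2 t3 t4 hak hkd had ht1 ht2 ht3 ht4 hA hB
      have hcore := core hak hkd had ht1 ht2 ht3 ht4 (hA ▸ hB ▸ hsum) (hA ▸ hB ▸ hdiff)
      obtain ⟨hkn, ht3'⟩ := hcore
      have hkL : k = ⟨n - 1, by omega⟩ := Fin.ext (by rw [hL]; exact hkn)
      refine ⟨a', d', t1, t4, t2, had, ?_, ?_, ht1, ht4, ht2, ?_, ?_⟩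
      · have := a'.isLt
        have : a'.val ≠ n - 1 := fun h => hak (Fin.ext (by rw [h, hkn]))
        omega
      · have := d'.isLt
        have : d'.val ≠ n - 1 := fun h => hkd (Fin.ext (by rw [h, hkn]))
        omega
      · rw [hA, hkL]
      · rw [hB, hkL, ht3']
        module
    by_cases hbc : b = c
    · subst hbc
      by_cases had : a = d
      · subst had
        exact absurd (by rw [hαeq, hβeq] at hsum; exact hsum)
          (fun h => no_double hab h1 h2 h4 h3
            (by rw [show s3 • e n b + s4 • e n a = s4 • e n a + s3 • e n b from add_comm _ _] at h
                exact h))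
      · exact build a b d s1 s2 s3 s4 hab hcd had h1 h2 h3 h4 hαeq hβeq
    · by_cases hbd : b = d
      · subst hbd
        by_cases hac : a = c
        · subst hac
          exact absurd (by rw [hαeq, hβeq] at hsum; exact hsum)
            (fun h => no_double hab h1 h2 h3 h4 h)
        · have hB' : β = s4 • e n b + s3 • e n c := by rw [hβeq]; module
          exact build a b c s1 s2 s4 s3 hab hbc hac h1 h2 h4 h3 hαeq hB'
      · by_cases hac : a = c
        · subst hac
          have hA' : α = s2 • e n b + s1 • e n a := by rw [hαeq]; module
          exact build b a d s2 s1 s3 s4 (Ne.symm hab) hcd hbd h2 h1 h3 h4 hA' hβeq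
        · by_cases had : a = d
          · subst had
            have hA' : α = s2 • e n b + s1 • e n a := by rw [hαeq]; module
            have hB' : β = s4 • e n a + s3 • e n c := by rw [hβeq]; module
            exact build b a c s2 s1 s4 s3 (Ne.symm hab) (Ne.symm hcd) hbc h2 h1 h4 h3 hA' hB'
          · exfalso
            exact no_disjoint hab hac hbc h1 h2 h3 hcd had hbd
              (by rw [hαeq, hβeq] at hsum; exact hsum)
  · rintro ⟨i, j, εi, εj, εn, hij, hi, hj, hεi, hεj, hεn, hA, hB⟩
    set L : Fin n := ⟨n - 1, by omega⟩ with hLdef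
    have hiL : i ≠ L := fun h => by rw [h] at hi; omega
    have hjL : j ≠ L := fun h => by rw [h] at hj; omega
    have hθβ : θD n β = εj • e n j + εn • e n L := by
      ext x
      have hβx : β x = (if x = j then εj else 0) - (if x = L then εn else 0) := by
        rw [hB]
        have : (εj • e n j - εn • e n L) x = (εj • e n j) x - (εn • e n L) x := rfl
        rw [this]
        simp [e, EuclideanSpace.single_apply, mul_ite]
      have hrhs : (εj • e n j + εn • e n L) x
          = (if x = j then εj else 0) + (if x = L then εn else 0) := coordEE n j L x εj εn
      have hθx : θD n β x = if x.val = n - 1 then -β x else β x := rfl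
      rw [hθx, hrhs, hβx]
      by_cases hxn : x.val = n - 1
      · have hxL : x = L := Fin.ext (by rw [hxn, hL])
        have hxj : x ≠ j := fun h => by rw [← h, hxn] at hj; omega
        rw [if_pos hxn, if_pos hxL, if_neg hxj]
        ring
      · have hxL : x ≠ L := fun h => hxn (by rw [h, hL])
        rw [if_neg hxn, if_neg hxL]
        ring
    constructor
    · have : α + β = εi • e n i + εj • e n j := by rw [hA, hB]; module
      rw [this]
      exact mem_ΔD_of hij hεi hεj
    · have : α - θD n β = εi • e n i + (-εj) • e n j := by rw [hA, hθβ]; module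
      rw [this]
      refine mem_ΔD_of hij hεi ?_
      rcases hεj with rfl | rfl <;> norm_num
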